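/- arXiv:1705.09180 — 2 statements merged into one kernel-verified Lean document; each statement's English description precedes it below -/
import Mathlib

section
/- Suppose all pairwise Euclidean distances dist(pᵢ, pⱼ), 0 ≤ i, j ≤ n, are integers and 0 < ε < 1/(4n). Let D_opt = min over permutations σ of T(σ) and L_opt = min over permutations σ of L(σ). Then D_opt ≤ L_opt < D_opt + 1/2; in particular D_opt = ⌊L_opt⌋. -/
/-- The start position of the split pair: `pᵢ` shifted left by `ε/2` along the x-axis
(the plane is modeled by `ℂ`). -/
noncomputable def startPt (q : ℂ) (ε : ℝ) : ℂ := q - (ε : ℂ) / 2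

/-- The goal position of the split pair: `pᵢ` shifted right by `ε/2` along the x-axis. -/
noncomputable def goalPt (q : ℂ) (ε : ℝ) : ℂ := q + (ε : ℂ) / 2

/-- The TSP tour length `T(σ)` through `p₀, p_{σ(1)}, …, p_{σ(n)}, p₀`.
Points `p₁, …, pₙ` are `p i.succ` for `i : Fin n`. -/
noncomputable def tourT (n : ℕ) (hn : 0 < n) (p : Fin (n + 1) → ℂ)
    (σ : Equiv.Perm (Fin n)) : ℝ :=
  dist (p 0) (p (σ ⟨0, hn⟩).succ)
    + ∑ i : Fin (n - 1),
        dist (p (σ ⟨i.1, by have := i.2; omega⟩).succ)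
             (p (σ ⟨i.1 + 1, by have := i.2; omega⟩).succ)
    + dist (p (σ ⟨n - 1, by omega⟩).succ) (p 0)

/-- The labeled split-tour length `L(σ)`:
`dist(p₀,s_{σ(1)}) + Σᵢ dist(s_{σ(i)},g_{σ(i)}) + Σᵢ dist(g_{σ(i)},s_{σ(i+1)}) + dist(g_{σ(n)},p₀)`. -/
noncomputable def tourL (n : ℕ) (hn : 0 < n) (p : Fin (n + 1) → ℂ) (ε : ℝ)
    (σ : Equiv.Perm (Fin n)) : ℝ :=
  dist (p 0) (startPt (p (σ ⟨0, hn⟩).succ) ε)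
    + ∑ i : Fin n, dist (startPt (p (σ i).succ) ε) (goalPt (p (σ i).succ) ε)
    + ∑ i : Fin (n - 1),
        dist (goalPt (p (σ ⟨i.1, by have := i.2; omega⟩).succ) ε)
             (startPt (p (σ ⟨i.1 + 1, by have := i.2; omega⟩).succ) ε)
    + dist (goalPt (p (σ ⟨n - 1, by omega⟩).succ) ε) (p 0)

lemma dist_start (q : ℂ) {ε : ℝ} (hε : 0 ≤ ε) : dist (startPt q ε) q = ε / 2 := by
  rw [Complex.dist_eq]
  have h : startPt q ε - q = -((ε/2 : ℝ) : ℂ) := by push_cast [startPt]; ring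
  rw [h, norm_neg, Complex.norm_real, Real.norm_eq_abs, abs_of_nonneg (by linarith)]

lemma dist_goal (q : ℂ) {ε : ℝ} (hε : 0 ≤ ε) : dist q (goalPt q ε) = ε / 2 := by
  rw [Complex.dist_eq]
  have h : q - goalPt q ε = -((ε/2 : ℝ) : ℂ) := by push_cast [goalPt]; ring
  rw [h, norm_neg, Complex.norm_real, Real.norm_eq_abs, abs_of_nonneg (by linarith)]

lemma dist_sg (q : ℂ) {ε : ℝ} (hε : 0 ≤ ε) : dist (startPt q ε) (goalPt q ε) = ε := by
  rw [Complex.dist_eq]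
  have h : startPt q ε - goalPt q ε = -((ε : ℝ) : ℂ) := by push_cast [startPt, goalPt]; ring
  rw [h, norm_neg, Complex.norm_real, Real.norm_eq_abs, abs_of_nonneg hε]

lemma ds_le (a b : ℂ) {ε : ℝ} (hε : 0 ≤ ε) : dist a (startPt b ε) ≤ dist a b + ε / 2 := by
  calc dist a (startPt b ε) ≤ dist a b + dist b (startPt b ε) := dist_triangle _ _ _
    _ = dist a b + ε / 2 := by rw [dist_comm b, dist_start b hε]

lemma ds_ge (a b : ℂ) {ε : ℝ} (hε : 0 ≤ ε) : dist a b - ε / 2 ≤ dist a (startPt b ε) := by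
  have := dist_triangle a (startPt b ε) b
  rw [dist_start b hε] at this; linarith

lemma dg_le (a b : ℂ) {ε : ℝ} (hε : 0 ≤ ε) : dist (goalPt a ε) b ≤ dist a b + ε / 2 := by
  calc dist (goalPt a ε) b ≤ dist (goalPt a ε) a + dist a b := dist_triangle _ _ _
    _ = dist a b + ε / 2 := by rw [dist_comm, dist_goal a hε]; ring

lemma dg_ge (a b : ℂ) {ε : ℝ} (hε : 0 ≤ ε) : dist a b - ε / 2 ≤ dist (goalPt a ε) b := by
  have := dist_triangle a (goalPt a ε) b
  rw [dist_goal a hε] at this; linarith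

lemma dgs_le (a b : ℂ) {ε : ℝ} (hε : 0 ≤ ε) :
    dist (goalPt a ε) (startPt b ε) ≤ dist a b + ε := by
  have h1 := dg_le a (startPt b ε) hε
  have h2 := ds_le a b hε
  linarith

lemma dgs_ge (a b : ℂ) {ε : ℝ} (hε : 0 ≤ ε) :
    dist a b - ε ≤ dist (goalPt a ε) (startPt b ε) := by
  have h1 := dist_triangle a (goalPt a ε) (startPt b ε)
  have h2 := dist_triangle a (startPt b ε) b
  rw [dist_goal a hε] at h1
  rw [dist_start b hε] at h2
  linarith

lemma tour_bounds (n : ℕ) (hn : 0 < n) (p : Fin (n + 1) → ℂ) {ε : ℝ} (hε : 0 ≤ ε)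
    (σ : Equiv.Perm (Fin n)) :
    tourT n hn p σ ≤ tourL n hn p ε σ ∧
      tourL n hn p ε σ ≤ tourT n hn p σ + 2 * n * ε := by
  have hS1 : ∑ i : Fin n, dist (startPt (p (σ i).succ) ε) (goalPt (p (σ i).succ) ε)
      = n * ε := by
    simp [dist_sg _ hε]
  have hcast : ((n - 1 : ℕ) : ℝ) = (n : ℝ) - 1 := by
    rw [Nat.cast_sub hn]; simp
  have hSle : ∑ i : Fin (n - 1),
        dist (goalPt (p (σ ⟨i.1, by have := i.2; omega⟩).succ) ε)
             (startPt (p (σ ⟨i.1 + 1, by have := i.2; omega⟩).succ) ε)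
      ≤ (∑ i : Fin (n - 1),
        dist (p (σ ⟨i.1, by have := i.2; omega⟩).succ)
             (p (σ ⟨i.1 + 1, by have := i.2; omega⟩).succ)) + ((n : ℝ) - 1) * ε := by
    calc _ ≤ ∑ i : Fin (n - 1),
          (dist (p (σ ⟨i.1, by have := i.2; omega⟩).succ)
               (p (σ ⟨i.1 + 1, by have := i.2; omega⟩).succ) + ε) :=
        Finset.sum_le_sum fun i _ => dgs_le _ _ hε
      _ = _ := by rw [Finset.sum_add_distrib, Finset.sum_const, Finset.card_univ,
            Fintype.card_fin, nsmul_eq_mul, hcast]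
  have hSge : (∑ i : Fin (n - 1),
        dist (p (σ ⟨i.1, by have := i.2; omega⟩).succ)
             (p (σ ⟨i.1 + 1, by have := i.2; omega⟩).succ)) - ((n : ℝ) - 1) * ε
      ≤ ∑ i : Fin (n - 1),
        dist (goalPt (p (σ ⟨i.1, by have := i.2; omega⟩).succ) ε)
             (startPt (p (σ ⟨i.1 + 1, by have := i.2; omega⟩).succ) ε) := by
    have : ∑ i : Fin (n - 1),
          (dist (p (σ ⟨i.1, by have := i.2; omega⟩).succ)
               (p (σ ⟨i.1 + 1, by have := i.2; omega⟩).succ) - ε)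
        ≤ ∑ i : Fin (n - 1),
          dist (goalPt (p (σ ⟨i.1, by have := i.2; omega⟩).succ) ε)
               (startPt (p (σ ⟨i.1 + 1, by have := i.2; omega⟩).succ) ε) :=
      Finset.sum_le_sum fun i _ => dgs_ge _ _ hε
    rw [Finset.sum_sub_distrib, Finset.sum_const, Finset.card_univ,
        Fintype.card_fin, nsmul_eq_mul, hcast] at this
    exact this
  have hA1 := ds_le (p 0) (p (σ ⟨0, hn⟩).succ) hε
  have hA2 := ds_ge (p 0) (p (σ ⟨0, hn⟩).succ) hε
  have hB1 := dg_le (p (σ ⟨n - 1, by omega⟩).succ) (p 0) hε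
  have hB2 := dg_ge (p (σ ⟨n - 1, by omega⟩).succ) (p 0) hε
  unfold tourT tourL
  rw [hS1]
  constructor <;> linarith

/-- Suppose all pairwise Euclidean distances dist(pᵢ,pⱼ) are integers and 0 < ε < 1/(4n).
Let D_opt = min over σ of T(σ) and L_opt = min over σ of L(σ).
Then D_opt ≤ L_opt < D_opt + 1/2; in particular D_opt = ⌊L_opt⌋. -/
theorem stmt_3 (n : ℕ) (hn : 0 < n) (p : Fin (n + 1) → ℂ)
    (hint : ∀ i j : Fin (n + 1), ∃ m : ℤ, dist (p i) (p j) = (m : ℝ))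
    (ε : ℝ) (hε : 0 < ε) (hε' : ε < 1 / (4 * n))
    (Dopt Lopt : ℝ)
    (hD : IsLeast (Set.range (tourT n hn p)) Dopt)
    (hL : IsLeast (Set.range (tourL n hn p ε)) Lopt) :
    Dopt ≤ Lopt ∧ Lopt < Dopt + 1 / 2 ∧ Dopt = (⌊Lopt⌋ : ℝ) := by
  classical
  obtain ⟨σL, hσL⟩ := hL.1
  obtain ⟨σD, hσD⟩ := hD.1
  have hnR : (0 : ℝ) < n := by exact_mod_cast hn
  have hsmall : 2 * (n : ℝ) * ε < 1 / 2 := by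
    have : (4 * (n : ℝ)) * ε < (4 * n) * (1 / (4 * n)) := by
      apply mul_lt_mul_of_pos_left hε' (by positivity)
    rw [mul_one_div, div_self (by positivity)] at this
    linarith
  have hDL : Dopt ≤ Lopt := by
    have h1 : Dopt ≤ tourT n hn p σL := hD.2 ⟨σL, rfl⟩
    have h2 := (tour_bounds n hn p hε.le σL).1
    linarith [hσL ▸ h2, h1]
  have hLD : Lopt < Dopt + 1 / 2 := by
    have h1 : Lopt ≤ tourL n hn p ε σD := hL.2 ⟨σD, rfl⟩
    have h2 := (tour_bounds n hn p hε.le σD).2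
    rw [hσD] at h2
    linarith
  refine ⟨hDL, hLD, ?_⟩
  -- Dopt is an integer
  choose f hf using hint
  have hint' : ∃ m : ℤ, Dopt = (m : ℝ) := by
    refine ⟨f 0 (σD ⟨0, hn⟩).succ
      + ∑ i : Fin (n - 1), f ((σD ⟨i.1, by have := i.2; omega⟩).succ)
          ((σD ⟨i.1 + 1, by have := i.2; omega⟩).succ)
      + f ((σD ⟨n - 1, by omega⟩).succ) 0, ?_⟩
    rw [← hσD]
    unfold tourT
    push_cast
    rw [hf, hf]
    congr 2
    exact Finset.sum_congr rfl fun i _ => hf _ _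
  obtain ⟨m, hm⟩ := hint'
  rw [hm]
  norm_cast
  symm
  rw [Int.floor_eq_iff]
  constructor
  · rw [← hm]; exact hDL
  · linarith [hm]
end

section
/- Suppose all pairwise Euclidean distances dist(pᵢ, pⱼ), 0 ≤ i, j ≤ n, are integers and 0 < ε < 1/(4n). Let D_opt = min over permutations σ of T(σ) and U_opt = min over pairs of permutations (σ, τ) of U(σ, τ). Then |U_opt − D_opt| < 1/2; in particular D_opt is the unique integer at distance less than 1/2 from U_opt. -/
/-- The unlabeled split-tour length `U(σ, τ)`:
`dist(p₀,s_{σ(1)}) + Σᵢ dist(s_{σ(i)},g_{τ(i)}) + Σᵢ dist(g_{τ(i)},s_{σ(i+1)}) + dist(g_{τ(n)},p₀)`. -/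
noncomputable def tourU (n : ℕ) (hn : 0 < n) (p : Fin (n + 1) → ℂ) (ε : ℝ)
    (σ τ : Equiv.Perm (Fin n)) : ℝ :=
  dist (p 0) (startPt (p (σ ⟨0, hn⟩).succ) ε)
    + ∑ i : Fin n, dist (startPt (p (σ i).succ) ε) (goalPt (p (τ i).succ) ε)
    + ∑ i : Fin (n - 1),
        dist (goalPt (p (τ ⟨i.1, by have := i.2; omega⟩).succ) ε)
             (startPt (p (σ ⟨i.1 + 1, by have := i.2; omega⟩).succ) ε)
    + dist (goalPt (p (τ ⟨n - 1, by omega⟩).succ) ε) (p 0)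


noncomputable def pathLen : List ℂ → ℝ
  | [] => 0
  | [_] => 0
  | a :: b :: t => dist a b + pathLen (b :: t)

lemma pathLen_nonneg : ∀ l : List ℂ, 0 ≤ pathLen l
  | [] => le_refl 0
  | [_] => le_refl 0
  | _ :: b :: t => add_nonneg dist_nonneg (pathLen_nonneg (b :: t))

lemma pathLen_le_cons (a : ℂ) (l : List ℂ) : pathLen l ≤ pathLen (a :: l) := by
  cases l with
  | nil => simp [pathLen]
  | cons b t => exact le_add_of_nonneg_left dist_nonneg

lemma pathLen_cons_le (x a : ℂ) (l : List ℂ) :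
    pathLen (x :: l) ≤ dist x a + pathLen (a :: l) := by
  cases l with
  | nil => simp [pathLen, dist_nonneg]
  | cons b t =>
    show dist x b + pathLen (b :: t) ≤ dist x a + (dist a b + pathLen (b :: t))
    have := dist_triangle x a b
    linarith

lemma pathLen_sublist : ∀ {l₁ l₂ : List ℂ}, List.Sublist l₁ l₂ →
    pathLen l₁ ≤ pathLen l₂ ∧ ∀ a, pathLen (a :: l₁) ≤ pathLen (a :: l₂) := by
  intro l₁ l₂ h
  induction h with
  | slnil => exact ⟨le_refl _, fun a => le_refl _⟩
  | cons b h ih =>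
    exact ⟨ih.1.trans (pathLen_le_cons b _), fun a => (ih.2 a).trans (pathLen_cons_le a b _)⟩
  | cons_cons b h ih =>
    refine ⟨ih.2 b, fun a => ?_⟩
    show dist a b + pathLen (b :: _) ≤ dist a b + pathLen (b :: _)
    exact add_le_add_right (ih.2 b) _

lemma pathLen_cons_ofFn (m : ℕ) (a : ℂ) (g : Fin (m+1) → ℂ) :
    pathLen (a :: List.ofFn g) = dist a (g 0) + pathLen (List.ofFn g) := by
  rw [List.ofFn_succ]; rfl

lemma pathLen_ofFn : ∀ (m : ℕ) (f : Fin (m+1) → ℂ),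
    pathLen (List.ofFn f) = ∑ i : Fin m, dist (f i.castSucc) (f i.succ) := by
  intro m
  induction m with
  | zero => intro f; simp [List.ofFn_succ, pathLen]
  | succ m ih =>
    intro f
    rw [List.ofFn_succ, pathLen_cons_ofFn, ih]
    simp [Fin.sum_univ_succ]

lemma pathLen_append_singleton : ∀ (l : List ℂ) (hl : l ≠ []) (b : ℂ),
    pathLen (l ++ [b]) = pathLen l + dist (l.getLast hl) b := by
  intro l
  induction l with
  | nil => intro hl; exact absurd rfl hl
  | cons a t ih =>
    intro _ b
    cases t with
    | nil => simp [pathLen]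
    | cons c s =>
      show dist a c + pathLen ((c :: s) ++ [b]) = dist a c + pathLen (c :: s) + _
      rw [ih (by simp) b]
      simp [List.getLast]
      ring

lemma pathLen_cons (a : ℂ) (l : List ℂ) (h : l ≠ []) :
    pathLen (a :: l) = dist a (l.head h) + pathLen l := by
  cases l with
  | nil => exact absurd rfl h
  | cons b t => rfl

lemma pathLen_cyc (m : ℕ) (f : Fin (m+1) → ℂ) (a b : ℂ) :
    pathLen (a :: (List.ofFn f ++ [b]))
      = dist a (f 0) + ∑ i : Fin m, dist (f i.castSucc) (f i.succ)
          + dist (f (Fin.last m)) b := by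
  have hne : List.ofFn f ≠ [] := by simp
  have hne2 : List.ofFn f ++ [b] ≠ [] := by simp
  rw [pathLen_cons a _ hne2, pathLen_append_singleton _ hne b, pathLen_ofFn,
    List.getLast_ofFn]
  have h0 : (List.ofFn f ++ [b]).head hne2 = f 0 := by
    rw [List.head_append]
    simp [List.head_ofFn]
  rw [h0]
  have : f ⟨m + 1 - 1, by omega⟩ = f (Fin.last m) := rfl
  rw [this]; ring

lemma sum_range_alt (a : ℕ → ℝ) (k : ℕ) :
    ∑ j ∈ Finset.range (2*k+1), a j
      = ∑ i ∈ Finset.range (k+1), a (2*i) + ∑ i ∈ Finset.range k, a (2*i+1) := by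
  induction k with
  | zero => simp
  | succ k ih =>
    have h1 : 2*(k+1)+1 = (2*k+1) + 1 + 1 := by ring
    rw [h1, Finset.sum_range_succ, Finset.sum_range_succ, ih,
      Finset.sum_range_succ (fun i => a (2*i)) (k+1), Finset.sum_range_succ (fun i => a (2*i+1)) k]
    have e1 : 2*(k+1) = 2*k+1+1 := by ring
    rw [e1]
    ring

lemma tourT_eq (k : ℕ) (hn : 0 < k+1) (p : Fin (k+1+1) → ℂ) (σ : Equiv.Perm (Fin (k+1))) :
    tourT (k+1) hn p σ
      = pathLen (p 0 :: (List.ofFn (fun i : Fin (k+1) => p (σ i).succ) ++ [p 0])) := by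
  rw [pathLen_cyc k (fun i : Fin (k+1) => p (σ i).succ) (p 0) (p 0)]
  rfl

section main
variable {ε : ℝ}

lemma dist_startPt (q : ℂ) (hε : 0 ≤ ε) : dist q (startPt q ε) = ε/2 := by
  rw [Complex.dist_eq, show q - startPt q ε = ((ε/2 : ℝ) : ℂ) by
    rw [startPt]; push_cast; ring]
  rw [Complex.norm_real, Real.norm_eq_abs, abs_of_nonneg (by linarith)]

lemma dist_goalPt (q : ℂ) (hε : 0 ≤ ε) : dist q (goalPt q ε) = ε/2 := by
  rw [Complex.dist_eq, show q - goalPt q ε = ((-(ε/2) : ℝ) : ℂ) by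
    rw [goalPt]; push_cast; ring]
  rw [Complex.norm_real, Real.norm_eq_abs, abs_of_nonpos (by linarith)]
  ring

lemma dist_start_goal (q : ℂ) (hε : 0 ≤ ε) :
    dist (startPt q ε) (goalPt q ε) = ε := by
  rw [Complex.dist_eq, show startPt q ε - goalPt q ε = ((-ε : ℝ) : ℂ) by
    rw [startPt, goalPt]; push_cast; ring]
  rw [Complex.norm_real, Real.norm_eq_abs, abs_of_nonpos (by linarith)]
  ring

lemma edge_bound (a b a' b' : ℂ) (r : ℝ) (h : dist a a' + dist b b' ≤ r) :
    dist a b ≤ dist a' b' + r ∧ dist a' b' ≤ dist a b + r := by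
  have h1 := dist_dist_dist_le a b a' b'
  rw [Real.dist_eq] at h1
  have h2 := abs_sub_le_iff.mp (h1.trans h)
  exact ⟨by linarith [h2.1], by linarith [h2.2]⟩

end main

/-- Suppose all pairwise Euclidean distances dist(pᵢ,pⱼ) are integers and 0 < ε < 1/(4n).
Let D_opt = min over σ of T(σ) and U_opt = min over pairs (σ,τ) of U(σ,τ).
Then |U_opt − D_opt| < 1/2; in particular D_opt is the unique integer at distance less
than 1/2 from U_opt. -/
theorem stmt_5 (n : ℕ) (hn : 0 < n) (p : Fin (n + 1) → ℂ)
    (hint : ∀ i j : Fin (n + 1), ∃ m : ℤ, dist (p i) (p j) = (m : ℝ))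
    (ε : ℝ) (hε : 0 < ε) (hε' : ε < 1 / (4 * n))
    (Dopt Uopt : ℝ)
    (hD : IsLeast (Set.range (tourT n hn p)) Dopt)
    (hU : IsLeast (Set.range fun στ : Equiv.Perm (Fin n) × Equiv.Perm (Fin n) =>
        tourU n hn p ε στ.1 στ.2) Uopt) :
    |Uopt - Dopt| < 1 / 2 ∧ (∃ m : ℤ, (m : ℝ) = Dopt) ∧
      ∀ m : ℤ, |Uopt - (m : ℝ)| < 1 / 2 → (m : ℝ) = Dopt := by
  obtain ⟨k, rfl⟩ : ∃ k, n = k + 1 := ⟨n - 1, by omega⟩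
  have hε0 : (0:ℝ) ≤ ε := le_of_lt hε
  have hTdef : ∀ σ : Equiv.Perm (Fin (k+1)), tourT (k+1) hn p σ =
      dist (p 0) (p (σ ⟨0, hn⟩).succ)
        + ∑ i : Fin k, dist (p (σ ⟨i.1, by omega⟩).succ) (p (σ ⟨i.1 + 1, by omega⟩).succ)
        + dist (p (σ ⟨k, by omega⟩).succ) (p 0) := fun _ => rfl
  have hUdef : ∀ σ τ : Equiv.Perm (Fin (k+1)), tourU (k+1) hn p ε σ τ =
      dist (p 0) (startPt (p (σ ⟨0, hn⟩).succ) ε)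
        + ∑ i : Fin (k+1), dist (startPt (p (σ i).succ) ε) (goalPt (p (τ i).succ) ε)
        + ∑ i : Fin k, dist (goalPt (p (τ ⟨i.1, by omega⟩).succ) ε)
            (startPt (p (σ ⟨i.1 + 1, by omega⟩).succ) ε)
        + dist (goalPt (p (τ ⟨k, by omega⟩).succ) ε) (p 0) := fun _ _ => rfl
  -- upper bound : tourU σ σ ≤ tourT σ + (2k+2)ε
  have upper : ∀ σ : Equiv.Perm (Fin (k+1)),
      tourU (k+1) hn p ε σ σ ≤ tourT (k+1) hn p σ + (2*(k:ℝ)+2)*ε := by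
    intro σ
    rw [hTdef, hUdef]
    have hA : dist (p 0) (startPt (p (σ ⟨0, hn⟩).succ) ε)
        ≤ dist (p 0) (p (σ ⟨0, hn⟩).succ) + (ε/2) := by
      have := (edge_bound (p 0) (p (σ ⟨0, hn⟩).succ) (p 0)
        (startPt (p (σ ⟨0, hn⟩).succ) ε) (ε/2)
        (by rw [dist_self, dist_startPt _ hε0]; linarith)).2
      linarith
    have hB : ∑ i : Fin (k+1), dist (startPt (p (σ i).succ) ε) (goalPt (p (σ i).succ) ε)
        = ((k:ℝ)+1)*ε := by
      simp [dist_start_goal _ hε0]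
    have hC : ∑ i : Fin k, dist (goalPt (p (σ ⟨i.1, by omega⟩).succ) ε)
            (startPt (p (σ ⟨i.1 + 1, by omega⟩).succ) ε)
        ≤ (∑ i : Fin k, dist (p (σ ⟨i.1, by omega⟩).succ) (p (σ ⟨i.1 + 1, by omega⟩).succ))
          + (k:ℝ)*ε := by
      have h1 : ∀ i : Fin k, dist (goalPt (p (σ ⟨i.1, by omega⟩).succ) ε)
            (startPt (p (σ ⟨i.1 + 1, by omega⟩).succ) ε)
          ≤ dist (p (σ ⟨i.1, by omega⟩).succ) (p (σ ⟨i.1 + 1, by omega⟩).succ) + ε := by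
        intro i
        exact (edge_bound (p (σ ⟨i.1, by omega⟩).succ) (p (σ ⟨i.1 + 1, by omega⟩).succ)
          (goalPt (p (σ ⟨i.1, by omega⟩).succ) ε) (startPt (p (σ ⟨i.1 + 1, by omega⟩).succ) ε) ε
          (by rw [dist_goalPt _ hε0, dist_startPt _ hε0]; linarith)).2
      calc ∑ i : Fin k, dist (goalPt (p (σ ⟨i.1, by omega⟩).succ) ε)
            (startPt (p (σ ⟨i.1 + 1, by omega⟩).succ) ε)
          ≤ ∑ i : Fin k, (dist (p (σ ⟨i.1, by omega⟩).succ) (p (σ ⟨i.1 + 1, by omega⟩).succ) + ε) :=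
            Finset.sum_le_sum (fun i _ => h1 i)
        _ = _ := by rw [Finset.sum_add_distrib]; simp [mul_comm]
    have hD' : dist (goalPt (p (σ ⟨k, by omega⟩).succ) ε) (p 0)
        ≤ dist (p (σ ⟨k, by omega⟩).succ) (p 0) + (ε/2) := by
      have := (edge_bound (p (σ ⟨k, by omega⟩).succ) (p 0)
        (goalPt (p (σ ⟨k, by omega⟩).succ) ε) (p 0) (ε/2)
        (by rw [dist_self, dist_goalPt _ hε0]; linarith)).2
      linarith
    linarith
  -- lower bound
  have lower : ∀ σ τ : Equiv.Perm (Fin (k+1)),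
      Dopt ≤ tourU (k+1) hn p ε σ τ + (2*(k:ℝ)+2)*ε := by
    intro σ τ
    set v : ℕ → Fin (k+1) := fun j =>
      if j % 2 = 0 then σ ⟨(j/2) % (k+1), Nat.mod_lt _ k.succ_pos⟩
      else τ ⟨(j/2) % (k+1), Nat.mod_lt _ k.succ_pos⟩ with hv
    set l : List (Fin (k+1)) := List.ofFn (fun j : Fin (2*k+1+1) => v j.1) with hl
    have hveven : ∀ (m : ℕ) (hm : m < k+1), v (2*m) = σ ⟨m, hm⟩ := by
      intro m hm
      have h2 : (2*m) % 2 = 0 := by omega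
      have h3 : (2*m) / 2 = m := by omega
      simp only [hv, h2, h3, if_pos, Nat.mod_eq_of_lt hm]
    have hvodd : ∀ (m : ℕ) (hm : m < k+1), v (2*m+1) = τ ⟨m, hm⟩ := by
      intro m hm
      have h2 : (2*m+1) % 2 = 1 := by omega
      have h3 : (2*m+1) / 2 = m := by omega
      simp only [hv, h2, h3, Nat.mod_eq_of_lt hm]
      norm_num
    have hmem : ∀ j : Fin (k+1), j ∈ l := by
      intro j
      rw [hl, List.mem_ofFn]
      refine ⟨⟨2 * (σ.symm j).1, by have := (σ.symm j).2; omega⟩, ?_⟩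
      show v (2 * (σ.symm j).1) = j
      rw [hveven _ (σ.symm j).2]
      simp
    set d := l.dedup with hd
    have hnodup : d.Nodup := l.nodup_dedup
    have hdlen : d.length = k+1 := by
      have h1 : d.toFinset = Finset.univ := by
        apply Finset.eq_univ_of_forall
        intro j
        rw [List.mem_toFinset, hd, List.mem_dedup]
        exact hmem j
      have h2 := List.toFinset_card_of_nodup hnodup
      rw [h1] at h2
      simpa using h2.symm
    have hinj : Function.Injective (fun i : Fin (k+1) => d.get (Fin.cast hdlen.symm i)) := by
      intro a b hab
      have h2 := List.nodup_iff_injective_get.mp hnodup hab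
      have h3 := congrArg Fin.val h2
      exact Fin.ext h3
    let ρ : Equiv.Perm (Fin (k+1)) := Equiv.ofBijective _ (Finite.injective_iff_bijective.mp hinj)
    have hofFn : List.ofFn (fun i : Fin (k+1) => d.get (Fin.cast hdlen.symm i)) = d := by
      apply List.ext_get (by simp [hdlen])
      intro m h1 h2
      rw [List.get_ofFn]
      rfl
    have hd1 : Dopt ≤ tourT (k+1) hn p ρ := hD.2 ⟨ρ, rfl⟩
    have hd2 : tourT (k+1) hn p ρ
        = pathLen (p 0 :: (List.map (fun i : Fin (k+1) => p i.succ) d ++ [p 0])) := by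
      rw [tourT_eq]
      have h3 : List.ofFn (fun i : Fin (k+1) => p (ρ i).succ)
          = List.map (fun i : Fin (k+1) => p i.succ) d := by
        rw [← hofFn, List.map_ofFn]
        rfl
      rw [h3]
    have hd3 : pathLen (p 0 :: (List.map (fun i : Fin (k+1) => p i.succ) d ++ [p 0]))
        ≤ pathLen (p 0 :: (List.map (fun i : Fin (k+1) => p i.succ) l ++ [p 0])) :=
      (pathLen_sublist (((l.dedup_sublist).map _).append_right _)).2 (p 0)
    have hd4 : pathLen (p 0 :: (List.map (fun i : Fin (k+1) => p i.succ) l ++ [p 0]))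
        ≤ tourU (k+1) hn p ε σ τ + (2*(k:ℝ)+2)*ε := by
      rw [hl, List.map_ofFn]
      rw [show ((fun i : Fin (k+1) => p i.succ) ∘ fun j : Fin (2*k+1+1) => v j.1)
          = fun j : Fin (2*k+1+1) => p (v j.1).succ from rfl]
      rw [pathLen_cyc (2*k+1) (fun j : Fin (2*k+1+1) => p (v j.1).succ) (p 0) (p 0)]
      rw [show (∑ i : Fin (2*k+1),
            dist ((fun j : Fin (2*k+1+1) => p (v j.1).succ) i.castSucc)
                 ((fun j : Fin (2*k+1+1) => p (v j.1).succ) i.succ))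
          = ∑ j ∈ Finset.range (2*k+1), dist (p (v j).succ) (p (v (j+1)).succ) from
        Fin.sum_univ_eq_sum_range (fun j => dist (p (v j).succ) (p (v (j+1)).succ)) (2*k+1)]
      rw [sum_range_alt (fun j => dist (p (v j).succ) (p (v (j+1)).succ)) k]
      have he : ∑ i ∈ Finset.range (k+1), dist (p (v (2*i)).succ) (p (v (2*i+1)).succ)
          = ∑ i : Fin (k+1), dist (p (σ i).succ) (p (τ i).succ) := by
        rw [← Fin.sum_univ_eq_sum_range
          (fun j => dist (p (v (2*j)).succ) (p (v (2*j+1)).succ)) (k+1)]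
        apply Finset.sum_congr rfl
        intro i _
        rw [hveven _ i.2, hvodd _ i.2]
      have ho : ∑ i ∈ Finset.range k, dist (p (v (2*i+1)).succ) (p (v (2*i+1+1)).succ)
          = ∑ i : Fin k, dist (p (τ ⟨i.1, by omega⟩).succ) (p (σ ⟨i.1+1, by omega⟩).succ) := by
        rw [← Fin.sum_univ_eq_sum_range
          (fun j => dist (p (v (2*j+1)).succ) (p (v (2*j+1+1)).succ)) k]
        apply Finset.sum_congr rfl
        intro i _
        have hik : (i:ℕ) < k+1 := by omega
        have e1 : 2*(i:ℕ)+1+1 = 2*((i:ℕ)+1) := by ring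
        rw [hvodd _ hik, e1, hveven _ (by omega)]
      rw [he, ho]
      have hh : v 0 = σ ⟨0, hn⟩ := by
        have := hveven 0 (by omega)
        simpa using this
      have hlast : v (2*k+1) = τ ⟨k, by omega⟩ := hvodd k (by omega)
      simp only [Fin.val_zero, Fin.val_last]
      rw [hh, hlast, hUdef]
      -- now per-edge bounds
      have bA : dist (p 0) (p (σ ⟨0, hn⟩).succ)
          ≤ dist (p 0) (startPt (p (σ ⟨0, hn⟩).succ) ε) + (ε/2) := by
        have := (edge_bound (p 0) (p (σ ⟨0, hn⟩).succ) (p 0)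
          (startPt (p (σ ⟨0, hn⟩).succ) ε) (ε/2)
          (by rw [dist_self, dist_startPt _ hε0]; linarith)).1
        linarith
      have bB : ∑ i : Fin (k+1), dist (p (σ i).succ) (p (τ i).succ)
          ≤ (∑ i : Fin (k+1), dist (startPt (p (σ i).succ) ε) (goalPt (p (τ i).succ) ε))
            + ((k:ℝ)+1)*ε := by
        have h1 : ∀ i : Fin (k+1), dist (p (σ i).succ) (p (τ i).succ)
            ≤ dist (startPt (p (σ i).succ) ε) (goalPt (p (τ i).succ) ε) + ε := by
          intro i
          exact (edge_bound (p (σ i).succ) (p (τ i).succ)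
            (startPt (p (σ i).succ) ε) (goalPt (p (τ i).succ) ε) ε
            (by rw [dist_startPt _ hε0, dist_goalPt _ hε0]; linarith)).1
        calc ∑ i : Fin (k+1), dist (p (σ i).succ) (p (τ i).succ)
            ≤ ∑ i : Fin (k+1),
                (dist (startPt (p (σ i).succ) ε) (goalPt (p (τ i).succ) ε) + ε) :=
              Finset.sum_le_sum (fun i _ => h1 i)
          _ = _ := by rw [Finset.sum_add_distrib]; simp [mul_comm]
      have bC : ∑ i : Fin k, dist (p (τ ⟨i.1, by omega⟩).succ) (p (σ ⟨i.1+1, by omega⟩).succ)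
          ≤ (∑ i : Fin k, dist (goalPt (p (τ ⟨i.1, by omega⟩).succ) ε)
              (startPt (p (σ ⟨i.1+1, by omega⟩).succ) ε)) + (k:ℝ)*ε := by
        have h1 : ∀ i : Fin k,
            dist (p (τ ⟨i.1, by omega⟩).succ) (p (σ ⟨i.1+1, by omega⟩).succ)
            ≤ dist (goalPt (p (τ ⟨i.1, by omega⟩).succ) ε)
                (startPt (p (σ ⟨i.1+1, by omega⟩).succ) ε) + ε := by
          intro i
          exact (edge_bound (p (τ ⟨i.1, by omega⟩).succ) (p (σ ⟨i.1+1, by omega⟩).succ)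
            (goalPt (p (τ ⟨i.1, by omega⟩).succ) ε)
            (startPt (p (σ ⟨i.1+1, by omega⟩).succ) ε) ε
            (by rw [dist_goalPt _ hε0, dist_startPt _ hε0]; linarith)).1
        calc ∑ i : Fin k, dist (p (τ ⟨i.1, by omega⟩).succ) (p (σ ⟨i.1+1, by omega⟩).succ)
            ≤ ∑ i : Fin k, (dist (goalPt (p (τ ⟨i.1, by omega⟩).succ) ε)
                (startPt (p (σ ⟨i.1+1, by omega⟩).succ) ε) + ε) :=
              Finset.sum_le_sum (fun i _ => h1 i)
          _ = _ := by rw [Finset.sum_add_distrib]; simp [mul_comm]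
      have bD : dist (p (τ ⟨k, by omega⟩).succ) (p 0)
          ≤ dist (goalPt (p (τ ⟨k, by omega⟩).succ) ε) (p 0) + (ε/2) := by
        have := (edge_bound (p (τ ⟨k, by omega⟩).succ) (p 0)
          (goalPt (p (τ ⟨k, by omega⟩).succ) ε) (p 0) (ε/2)
          (by rw [dist_self, dist_goalPt _ hε0]; linarith)).1
        linarith
      linarith
    linarith
  -- assemble
  obtain ⟨σ₀, hσ₀⟩ := hD.1
  obtain ⟨⟨σu, τu⟩, hu⟩ := hU.1
  simp only at hu
  have hU1 : Uopt ≤ Dopt + (2*(k:ℝ)+2)*ε := by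
    have h1 : Uopt ≤ tourU (k+1) hn p ε σ₀ σ₀ := hU.2 ⟨(σ₀, σ₀), rfl⟩
    have h2 := upper σ₀
    rw [hσ₀] at h2
    linarith
  have hU2 : Dopt ≤ Uopt + (2*(k:ℝ)+2)*ε := by
    have h1 := lower σu τu
    rw [hu] at h1
    linarith
  have hE : (2*(k:ℝ)+2)*ε < 1/2 := by
    have hε'' : ε < 1/(4*((k:ℝ)+1)) := by
      have hc : ((k+1 : ℕ):ℝ) = (k:ℝ)+1 := by push_cast; ring
      rw [← hc]
      exact_mod_cast hε'
    have hk : (0:ℝ) < 4*((k:ℝ)+1) := by positivity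
    rw [lt_div_iff₀ hk] at hε''
    nlinarith
  have habs : |Uopt - Dopt| < 1/2 := by
    rw [abs_sub_lt_iff]
    constructor <;> linarith
  have hDint : ∃ m : ℤ, (m:ℝ) = Dopt := by
    rw [← hσ₀, hTdef σ₀]
    obtain ⟨m1, hm1⟩ := hint 0 (σ₀ ⟨0, hn⟩).succ
    obtain ⟨m3, hm3⟩ := hint (σ₀ ⟨k, by omega⟩).succ 0
    choose g hg using fun i : Fin k =>
      hint (σ₀ ⟨i.1, by omega⟩).succ (σ₀ ⟨i.1+1, by omega⟩).succ
    refine ⟨m1 + ∑ i : Fin k, g i + m3, ?_⟩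
    push_cast
    rw [← hm1, ← hm3]
    have : ∑ i : Fin k, ((g i : ℝ))
        = ∑ i : Fin k, dist (p (σ₀ ⟨i.1, by omega⟩).succ) (p (σ₀ ⟨i.1+1, by omega⟩).succ) :=
      Finset.sum_congr rfl (fun i _ => (hg i).symm)
    rw [this]
  refine ⟨habs, hDint, ?_⟩
  intro m hm
  obtain ⟨mD, hmD⟩ := hDint
  have h2 : |(m:ℝ) - (mD:ℝ)| < 1 := by
    rw [abs_sub_lt_iff] at hm habs ⊢
    rw [hmD]
    constructor <;> linarith [habs.1, habs.2, hm.1, hm.2]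
  have h3 : m = mD := by
    have h4 : |((m - mD : ℤ) : ℝ)| < 1 := by push_cast; exact h2
    have h5 : |m - mD| < 1 := by exact_mod_cast h4
    have := Int.abs_lt_one_iff.mp h5
    omega
  rw [h3, hmD]
end
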